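/- Let (Ω, F, P) be a probability space with a filtration (F_t)_{0 ≤ t ≤ T} such that F_0 is P-trivial (every A ∈ F_0 has P(A) ∈ {0,1}). Suppose that for every pair 0 ≤ s ≤ t ≤ T we are given a map π_{st} : L^∞(F_t) → L^∞(F_s) satisfying: (A1) each π_{st} is a bounded, positive (Y ≥ 0 a.s. implies π_{st}(Y) ≥ 0 a.s.), linear operator; (A2) for every Y ∈ L^∞(F_t) with Y ≥ 0 a.s., π_{0t}(Y) = 0 a.s. if and only if Y = 0 a.s.; (A3) for all 0 ≤ s ≤ t ≤ u ≤ T, Y ∈ L^∞(F_u) and X ∈ L^∞(F_t), π_{su}(XY) = π_{st}(X·π_{tu}(Y)); (A4) if Y_n ∈ L^∞(F_t), |Y_n| ≤ 1 a.s. and Y_n ↑ Y pointwise a.s., then π_{st}(Y_n) ↑ π_{st}(Y) a.s. Then there exists a family (ζ_t)_{0 ≤ t ≤ T} of integrable random variables with each ζ_t F_t-measurable and ζ_t > 0 a.s., such that for all 0 ≤ s ≤ t ≤ T and all Y ∈ L^∞(F_t), ζ_s · π_{st}(Y) = E[ζ_t Y | F_s] almost surely (here L^∞(F_0) is identified with ℝ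 via the triviality of F_0). -/

import Mathlib

open MeasureTheory Filter

/-- `X` is (a representative of an element of) `L^∞` of the σ-algebra `m`: it is
`m`-measurable and bounded. -/
def MemLinf {Ω : Type*} (m : MeasurableSpace Ω) (X : Ω → ℝ) : Prop :=
  Measurable[m] X ∧ ∃ C : ℝ, ∀ ω, |X ω| ≤ C

open scoped ENNReal

set_option linter.unusedVariables false

lemma rn_lemma {Ω : Type*} {F : MeasurableSpace Ω} [m : MeasurableSpace Ω] (hle : m ≤ F)
    (μ : @MeasureTheory.Measure Ω F) [IsFiniteMeasure μ]
    (g : Set Ω → ℝ) (hg0 : ∀ A, MeasurableSet A → 0 ≤ g A)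
    (hgnull : ∀ A, MeasurableSet A → μ A = 0 → g A = 0)
    (hgempty : g ∅ = 0)
    (hgadd : ∀ f : ℕ → Set Ω, (∀ i, MeasurableSet (f i)) → Pairwise (Function.onFun Disjoint f) →
      HasSum (fun i => g (f i)) (g (⋃ i, f i))) :
    ∃ z : Ω → ℝ, Measurable[m] z ∧ (∀ ω, 0 ≤ z ω) ∧ Integrable z μ ∧
      ∀ A, MeasurableSet A → ∫ ω in A, z ω ∂μ = g A := by
  set Q : @MeasureTheory.Measure Ω m := Measure.ofMeasurable (fun A _ => ENNReal.ofReal (g A))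
    (by simp [hgempty])
    (fun f hf hd => by
      rw [← ENNReal.ofReal_tsum_of_nonneg (fun i => hg0 _ (hf i)) (hgadd f hf hd).summable,
        (hgadd f hf hd).tsum_eq]) with hQdef
  have hQ : ∀ A : Set Ω, MeasurableSet A → Q A = ENNReal.ofReal (g A) := fun A hA =>
    Measure.ofMeasurable_apply A hA
  haveI : IsFiniteMeasure Q := ⟨by rw [hQ _ MeasurableSet.univ]; exact ENNReal.ofReal_lt_top⟩
  set ν : @MeasureTheory.Measure Ω m := μ.trim hle with hν
  have hac : Q ≪ ν := by
    refine Measure.AbsolutelyContinuous.mk fun A hA h0 => ?_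
    rw [hQ A hA, hgnull A hA (by rwa [hν, trim_measurableSet_eq hle hA] at h0)]
    simp
  set rn : Ω → ℝ≥0∞ := Q.rnDeriv ν with hrn
  have hrnm : Measurable[m] rn := Measure.measurable_rnDeriv _ _
  have hrnlt : ∀ᵐ ω ∂μ, rn ω < ⊤ := ae_of_ae_trim hle (Measure.rnDeriv_lt_top Q ν)
  refine ⟨fun ω => (rn ω).toReal, hrnm.ennreal_toReal, fun ω => ENNReal.toReal_nonneg, ?_, ?_⟩
  · refine integrable_toReal_of_lintegral_ne_top ((hrnm.mono hle le_rfl).aemeasurable) ?_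
    rw [← lintegral_trim hle hrnm, ← hν, Measure.lintegral_rnDeriv hac]
    exact measure_ne_top _ _
  · intro A hA
    have hlint : ∫⁻ ω in A, rn ω ∂μ = Q A := by
      rw [← lintegral_indicator (hle _ hA), ← lintegral_trim hle (hrnm.indicator hA), ← hν,
        lintegral_indicator hA]
      exact Measure.setLIntegral_rnDeriv hac A
    rw [integral_toReal ((hrnm.mono hle le_rfl).aemeasurable.restrict) (ae_restrict_of_ae hrnlt),
      hlint, hQ A hA, ENNReal.toReal_ofReal (hg0 A hA)]

lemma key_ext {Ω : Type*} [m : MeasurableSpace Ω]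
    (I J : (Ω → ℝ) → ℝ)
    (hIJind : ∀ A : Set Ω, MeasurableSet A →
      I (A.indicator fun _ => 1) = J (A.indicator fun _ => 1))
    (haddI : ∀ f g : Ω → ℝ, Measurable f → Measurable g → (∃ C, ∀ ω, |f ω| ≤ C) →
      (∃ C, ∀ ω, |g ω| ≤ C) → I (f + g) = I f + I g)
    (haddJ : ∀ f g : Ω → ℝ, Measurable f → Measurable g → (∃ C, ∀ ω, |f ω| ≤ C) →
      (∃ C, ∀ ω, |g ω| ≤ C) → J (f + g) = J f + J g)
    (hsmulI : ∀ (c : ℝ) (f : Ω → ℝ), Measurable f → (∃ C, ∀ ω, |f ω| ≤ C) → I (c • f) = c * I f)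
    (hsmulJ : ∀ (c : ℝ) (f : Ω → ℝ), Measurable f → (∃ C, ∀ ω, |f ω| ≤ C) → J (c • f) = c * J f)
    (hmonoI : ∀ (f : ℕ → Ω → ℝ) (flim : Ω → ℝ), (∀ n, Measurable (f n)) → Measurable flim →
      (∀ n ω, 0 ≤ f n ω) → (∀ n ω, f n ω ≤ 1) → (∀ ω, Monotone fun n => f n ω) →
      (∀ ω, Tendsto (fun n => f n ω) atTop (nhds (flim ω))) →
      Tendsto (fun n => I (f n)) atTop (nhds (I flim)))
    (hmonoJ : ∀ (f : ℕ → Ω → ℝ) (flim : Ω → ℝ), (∀ n, Measurable (f n)) → Measurable flim →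
      (∀ n ω, 0 ≤ f n ω) → (∀ n ω, f n ω ≤ 1) → (∀ ω, Monotone fun n => f n ω) →
      (∀ ω, Tendsto (fun n => f n ω) atTop (nhds (flim ω))) →
      Tendsto (fun n => J (f n)) atTop (nhds (J flim))) :
    ∀ Z : Ω → ℝ, Measurable Z → (∃ C, ∀ ω, |Z ω| ≤ C) → I Z = J Z := by
  have hbd : ∀ φ : SimpleFunc Ω ℝ, ∃ C, ∀ ω, |φ ω| ≤ C := by
    intro φ
    obtain ⟨C, hC⟩ := (φ.map fun x => |x|).exists_forall_le
    exact ⟨C, fun ω => by simpa using hC ω⟩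
  -- step 1: simple functions
  have hsf : ∀ φ : SimpleFunc Ω ℝ, I φ = J φ := by
    intro φ
    refine SimpleFunc.induction ?_ ?_ φ
    · intro c s hs
      have hcoe : ⇑(SimpleFunc.piecewise s hs (SimpleFunc.const Ω c) (SimpleFunc.const Ω 0))
          = c • (s.indicator fun _ => (1 : ℝ)) := by
        funext ω; by_cases hω : ω ∈ s <;>
          simp [SimpleFunc.piecewise_apply, Set.indicator_apply, hω]
      have hmind : Measurable (s.indicator fun _ => (1 : ℝ)) := measurable_const.indicator hs
      have hbind : ∃ C, ∀ ω, |(s.indicator fun _ => (1 : ℝ)) ω| ≤ C :=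
        ⟨1, fun ω => by by_cases hω : ω ∈ s <;> simp [Set.indicator_apply, hω]⟩
      rw [hcoe, hsmulI c _ hmind hbind, hsmulJ c _ hmind hbind, hIJind s hs]
    · intro f g hdis hf hg
      rw [SimpleFunc.coe_add, haddI _ _ f.measurable g.measurable (hbd f) (hbd g),
        haddJ _ _ f.measurable g.measurable (hbd f) (hbd g), hf, hg]
  -- step 2: nonneg bounded by one
  have hunit : ∀ Z : Ω → ℝ, Measurable Z → (∀ ω, 0 ≤ Z ω) → (∀ ω, Z ω ≤ 1) → I Z = J Z := by
    intro Z hZm hZ0 hZ1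
    set ZE : Ω → ℝ≥0∞ := fun ω => ENNReal.ofReal (Z ω) with hZEdef
    have hZEm : Measurable ZE := hZm.ennreal_ofReal
    have hZE1 : ∀ ω, ZE ω ≤ 1 := fun ω => by
      simpa [hZEdef] using ENNReal.ofReal_le_one.mpr (hZ1 ω)
    set φ : ℕ → SimpleFunc Ω ℝ := fun n => (SimpleFunc.eapprox ZE n).map ENNReal.toReal with hφdef
    have heap_le : ∀ n ω, SimpleFunc.eapprox ZE n ω ≤ 1 := by
      intro n ω
      refine le_trans ?_ (hZE1 ω)
      rw [← SimpleFunc.iSup_eapprox_apply hZEm]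
      exact le_iSup (fun k => SimpleFunc.eapprox ZE k ω) n
    have hφ_apply : ∀ n ω, φ n ω = (SimpleFunc.eapprox ZE n ω).toReal := by
      intro n ω; simp [hφdef]
    have hφ0 : ∀ n ω, 0 ≤ φ n ω := fun n ω => by
      rw [hφ_apply]; exact ENNReal.toReal_nonneg
    have hφ1 : ∀ n ω, φ n ω ≤ 1 := fun n ω => by
      rw [hφ_apply]
      exact ENNReal.toReal_le_of_le_ofReal zero_le_one (by simpa using heap_le n ω)
    have hφmono : ∀ ω, Monotone fun n => φ n ω := by
      intro ω a b hab
      simp only [hφ_apply]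
      exact ENNReal.toReal_mono ((heap_le b ω).trans_lt ENNReal.one_lt_top).ne
        (SimpleFunc.monotone_eapprox ZE hab ω)
    have hφtend : ∀ ω, Tendsto (fun n => φ n ω) atTop (nhds (Z ω)) := by
      intro ω
      have h1 : Tendsto (fun n => SimpleFunc.eapprox ZE n ω) atTop (nhds (ZE ω)) := by
        rw [← SimpleFunc.iSup_eapprox_apply hZEm]
        exact tendsto_atTop_iSup fun a b hab => SimpleFunc.monotone_eapprox ZE hab ω
      have h2 := (ENNReal.tendsto_toReal ((hZE1 ω).trans_lt ENNReal.one_lt_top).ne).comp h1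
      have h3 : (ZE ω).toReal = Z ω := by simp [hZEdef, ENNReal.toReal_ofReal (hZ0 ω)]
      simpa [hφ_apply, h3, Function.comp_def] using h2
    have hI := hmonoI (fun n => φ n) Z (fun n => (φ n).measurable) hZm hφ0 hφ1 hφmono hφtend
    have hJ := hmonoJ (fun n => φ n) Z (fun n => (φ n).measurable) hZm hφ0 hφ1 hφmono hφtend
    have hI' : Tendsto (fun n => J (φ n)) atTop (nhds (I Z)) := by
      refine hI.congr fun n => hsf (φ n)
    exact tendsto_nhds_unique hI' hJ
  -- step 3: nonneg bounded
  have hnn : ∀ Z : Ω → ℝ, Measurable Z → (∀ ω, 0 ≤ Z ω) → (∃ C, ∀ ω, |Z ω| ≤ C) → I Z = J Z := by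
    rintro Z hZm hZ0 ⟨C, hC⟩
    set D := max C 1 with hD
    have hD1 : (1 : ℝ) ≤ D := le_max_right _ _
    have hD0 : (0 : ℝ) < D := lt_of_lt_of_le one_pos hD1
    set W : Ω → ℝ := fun ω => D⁻¹ * Z ω with hW
    have hWm : Measurable W := measurable_const.mul hZm
    have hW0 : ∀ ω, 0 ≤ W ω := fun ω => mul_nonneg (inv_nonneg.mpr hD0.le) (hZ0 ω)
    have hW1 : ∀ ω, W ω ≤ 1 := by
      intro ω
      have hZD : Z ω ≤ D := ((le_abs_self _).trans (hC ω)).trans (le_max_left _ _)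
      calc D⁻¹ * Z ω ≤ D⁻¹ * D := by
            exact mul_le_mul_of_nonneg_left hZD (inv_nonneg.mpr hD0.le)
        _ = 1 := inv_mul_cancel₀ hD0.ne'
    have hZeq : Z = D • W := by
      funext ω; simp only [hW, Pi.smul_apply, smul_eq_mul]; field_simp
    have hWb : ∃ C, ∀ ω, |W ω| ≤ C := ⟨1, fun ω => abs_le.mpr ⟨by linarith [hW0 ω], hW1 ω⟩⟩
    rw [hZeq, hsmulI D W hWm hWb, hsmulJ D W hWm hWb, hunit W hWm hW0 hW1]
  -- step 4: general
  rintro Z hZm ⟨C, hC⟩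
  set P : Ω → ℝ := fun ω => max (Z ω) 0 with hP
  set N : Ω → ℝ := fun ω => max (-(Z ω)) 0 with hN
  have hPm : Measurable P := hZm.max measurable_const
  have hNm : Measurable N := hZm.neg.max measurable_const
  have hP0 : ∀ ω, 0 ≤ P ω := fun ω => le_max_right _ _
  have hN0 : ∀ ω, 0 ≤ N ω := fun ω => le_max_right _ _
  have hPb : ∃ C, ∀ ω, |P ω| ≤ C := ⟨max C 0, fun ω => by
    rw [abs_of_nonneg (hP0 ω)]
    exact max_le_max (((le_abs_self _).trans (hC ω))) le_rfl⟩
  have hNb : ∃ C, ∀ ω, |N ω| ≤ C := ⟨max C 0, fun ω => by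
    rw [abs_of_nonneg (hN0 ω)]
    exact max_le_max ((neg_le_abs _).trans (hC ω)) le_rfl⟩
  have hNb' : ∃ C', ∀ ω, |((-1 : ℝ) • N) ω| ≤ C' := by
    obtain ⟨C', hC'⟩ := hNb
    exact ⟨C', fun ω => by simpa using hC' ω⟩
  have hZPN : Z = P + (-1 : ℝ) • N := by
    funext ω
    simp only [hP, hN, Pi.add_apply, Pi.smul_apply, smul_eq_mul]
    rcases le_total (Z ω) 0 with h | h
    · rw [max_eq_right h, max_eq_left (by linarith)]; ring
    · rw [max_eq_left h, max_eq_right (by linarith)]; ring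
  rw [hZPN, haddI P _ hPm (hNm.const_smul (-1 : ℝ)) hPb hNb',
    haddJ P _ hPm (hNm.const_smul (-1 : ℝ)) hPb hNb',
    hsmulI (-1 : ℝ) N hNm hNb, hsmulJ (-1 : ℝ) N hNm hNb,
    hnn P hPm hP0 hPb, hnn N hNm hN0 hNb]

/-- Theorem 1 of the paper: given a filtration `(𝔽_t)_{0 ≤ t ≤ T}` with `𝔽_0`
trivial, and valuation operators `π_{st} : L^∞(𝔽_t) → L^∞(𝔽_s)` that are (A1) bounded positive
linear operators, (A2) without arbitrage at time `0`, (A3) dynamically consistent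
(`π_{su}(XY) = π_{st}(X·π_{tu}(Y))`), and (A4) continuous under bounded monotone convergence,
there exists a strictly positive, adapted, integrable state-price density process `ζ` with
`ζ_s · π_{st}(Y) = E[ζ_t Y | 𝔽_s]` a.s. for all `0 ≤ s ≤ t ≤ T` and all `Y ∈ L^∞(𝔽_t)`. -/
theorem stmt_0 {Ω : Type*} {F : MeasurableSpace Ω} (μ : Measure Ω) [IsProbabilityMeasure μ]
    (T : ℝ) (hT : 0 ≤ T)
    (𝔽 : ℝ → MeasurableSpace Ω)
    (h𝔽mono : ∀ s t : ℝ, 0 ≤ s → s ≤ t → t ≤ T → 𝔽 s ≤ 𝔽 t)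
    (h𝔽le : ∀ t : ℝ, 0 ≤ t → t ≤ T → 𝔽 t ≤ F)
    (h𝔽0 : ∀ A : Set Ω, MeasurableSet[𝔽 0] A → μ A = 0 ∨ μ A = 1)
    (π : ℝ → ℝ → (Ω → ℝ) → (Ω → ℝ))
    -- π_{st} maps L^∞(𝔽_t) into L^∞(𝔽_s) and is well defined on a.e.-equivalence classes
    (hmem : ∀ s t : ℝ, 0 ≤ s → s ≤ t → t ≤ T →
      ∀ Y, MemLinf (𝔽 t) Y → MemLinf (𝔽 s) (π s t Y))
    (hwd : ∀ s t : ℝ, 0 ≤ s → s ≤ t → t ≤ T →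
      ∀ Y Y', MemLinf (𝔽 t) Y → MemLinf (𝔽 t) Y' → Y =ᵐ[μ] Y' → π s t Y =ᵐ[μ] π s t Y')
    -- (A1) linearity
    (hadd : ∀ s t : ℝ, 0 ≤ s → s ≤ t → t ≤ T →
      ∀ Y Y', MemLinf (𝔽 t) Y → MemLinf (𝔽 t) Y' →
        π s t (Y + Y') =ᵐ[μ] π s t Y + π s t Y')
    (hsmul : ∀ s t : ℝ, 0 ≤ s → s ≤ t → t ≤ T →
      ∀ (c : ℝ) (Y : Ω → ℝ), MemLinf (𝔽 t) Y → π s t (c • Y) =ᵐ[μ] c • π s t Y)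
    -- (A1) positivity
    (hpos : ∀ s t : ℝ, 0 ≤ s → s ≤ t → t ≤ T →
      ∀ Y, MemLinf (𝔽 t) Y → (0 ≤ᵐ[μ] Y) → 0 ≤ᵐ[μ] π s t Y)
    -- (A1) boundedness
    (hbdd : ∀ s t : ℝ, 0 ≤ s → s ≤ t → t ≤ T →
      ∃ C : ℝ, ∀ (Y : Ω → ℝ) (M : ℝ), MemLinf (𝔽 t) Y → (∀ᵐ ω ∂μ, |Y ω| ≤ M) →
        ∀ᵐ ω ∂μ, |π s t Y ω| ≤ C * M)
    -- (A2) no arbitrage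
    (hna : ∀ t : ℝ, 0 ≤ t → t ≤ T →
      ∀ Y, MemLinf (𝔽 t) Y → (0 ≤ᵐ[μ] Y) → (π 0 t Y =ᵐ[μ] 0 ↔ Y =ᵐ[μ] 0))
    -- (A3) dynamic consistency
    (hdc : ∀ s t u : ℝ, 0 ≤ s → s ≤ t → t ≤ u → u ≤ T →
      ∀ (Y X : Ω → ℝ), MemLinf (𝔽 u) Y → MemLinf (𝔽 t) X →
        π s u (X * Y) =ᵐ[μ] π s t (X * π t u Y))
    -- (A4) continuity under bounded monotone convergence
    (hcont : ∀ s t : ℝ, 0 ≤ s → s ≤ t → t ≤ T →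
      ∀ (Y : ℕ → Ω → ℝ) (Ylim : Ω → ℝ),
        (∀ n, MemLinf (𝔽 t) (Y n)) → MemLinf (𝔽 t) Ylim →
        (∀ᵐ ω ∂μ, (∀ n, |Y n ω| ≤ 1) ∧ Monotone (fun n => Y n ω) ∧
          Tendsto (fun n => Y n ω) atTop (nhds (Ylim ω))) →
        ∀ᵐ ω ∂μ, Monotone (fun n => π s t (Y n) ω) ∧
          Tendsto (fun n => π s t (Y n) ω) atTop (nhds (π s t Ylim ω))) :
    ∃ ζ : ℝ → Ω → ℝ,
      (∀ t : ℝ, 0 ≤ t → t ≤ T →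
        Integrable (ζ t) μ ∧ Measurable[𝔽 t] (ζ t) ∧ (∀ᵐ ω ∂μ, 0 < ζ t ω)) ∧
      ∀ s t : ℝ, 0 ≤ s → s ≤ t → t ≤ T → ∀ Y, MemLinf (𝔽 t) Y →
        (fun ω => ζ s ω * π s t Y ω) =ᵐ[μ] μ[fun ω => ζ t ω * Y ω | 𝔽 s] := by
  classical
  have hle0 : 𝔽 0 ≤ F := h𝔽le 0 le_rfl hT
  have key : ∀ t : ℝ, 0 ≤ t → t ≤ T → ∃ z : Ω → ℝ,
      Integrable z μ ∧ Measurable[𝔽 t] z ∧ (∀ᵐ ω ∂μ, 0 < z ω) ∧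
      ∀ Z : Ω → ℝ, MemLinf (𝔽 t) Z → ∫ ω, z ω * Z ω ∂μ = ∫ ω, π 0 t Z ω ∂μ := by
    intro t ht0 htT
    have hle : 𝔽 t ≤ F := h𝔽le t ht0 htT
    have memind : ∀ A : Set Ω, MeasurableSet[𝔽 t] A →
        MemLinf (𝔽 t) (A.indicator fun _ => (1 : ℝ)) := by
      intro A hA
      refine ⟨measurable_const.indicator hA, 1, fun ω => ?_⟩
      by_cases hω : ω ∈ A <;> simp [Set.indicator_apply, hω]
    have mem0 : MemLinf (𝔽 t) (fun _ => (0 : ℝ)) := ⟨measurable_const, 0, by simp⟩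
    have intπ : ∀ Z, MemLinf (𝔽 t) Z → Integrable (π 0 t Z) μ := by
      intro Z hZ
      obtain ⟨hm, C, hC⟩ := hmem 0 t le_rfl ht0 htT Z hZ
      exact Integrable.mono' (integrable_const C) ((hm.mono hle0 le_rfl).aestronglyMeasurable)
        (Eventually.of_forall fun ω => by simpa [Real.norm_eq_abs] using hC ω)
    have πzero : π 0 t (fun _ => (0 : ℝ)) =ᵐ[μ] fun _ => (0 : ℝ) := by
      have h := hsmul 0 t le_rfl ht0 htT 0 (fun _ => (0 : ℝ)) mem0
      rw [show ((0 : ℝ) • fun _ : Ω => (0 : ℝ)) = (fun _ : Ω => (0 : ℝ)) by funext ω; simp] at h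
      filter_upwards [h] with ω hω
      simpa using hω
    set g : Set Ω → ℝ := fun A => ∫ ω, π 0 t (A.indicator fun _ => (1 : ℝ)) ω ∂μ with hgdef
    have gnn : ∀ A, MeasurableSet[𝔽 t] A → 0 ≤ g A := by
      intro A hA
      exact integral_nonneg_of_ae (hpos 0 t le_rfl ht0 htT _ (memind A hA)
        (Eventually.of_forall fun ω => Set.indicator_nonneg (fun _ _ => zero_le_one) ω))
    have gempty : g ∅ = 0 := by
      have h1 : (∅ : Set Ω).indicator (fun _ => (1 : ℝ)) = fun _ => (0 : ℝ) := by
        funext ω; simp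
      rw [hgdef]
      simp only [h1]
      rw [integral_congr_ae πzero]
      simp
    have gnull : ∀ A, MeasurableSet[𝔽 t] A → μ A = 0 → g A = 0 := by
      intro A hA h0
      have hnm : ∀ᵐ ω ∂μ, ω ∉ A := measure_eq_zero_iff_ae_notMem.mp h0
      have hae : (A.indicator fun _ => (1 : ℝ)) =ᵐ[μ] fun _ => (0 : ℝ) := by
        filter_upwards [hnm] with ω hω
        simp [Set.indicator_apply, hω]
      calc g A = ∫ ω, π 0 t (fun _ => (0 : ℝ)) ω ∂μ :=
            integral_congr_ae (hwd 0 t le_rfl ht0 htT _ _ (memind A hA) mem0 hae)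
        _ = 0 := by rw [integral_congr_ae πzero]; simp
    -- monotone continuity of the J-functional
    have πtend : ∀ (f : ℕ → Ω → ℝ) (flim : Ω → ℝ), (∀ n, MemLinf (𝔽 t) (f n)) →
        MemLinf (𝔽 t) flim → (∀ n ω, |f n ω| ≤ 1) → (∀ ω, Monotone fun n => f n ω) →
        (∀ ω, Tendsto (fun n => f n ω) atTop (nhds (flim ω))) →
        Tendsto (fun n => ∫ ω, π 0 t (f n) ω ∂μ) atTop (nhds (∫ ω, π 0 t flim ω ∂μ)) := by
      intro f flim hfmem hflimmem hf1 hfmono hftend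
      have hcont' := hcont 0 t le_rfl ht0 htT f flim hfmem hflimmem
        (Eventually.of_forall fun ω => ⟨fun n => hf1 n ω, hfmono ω, hftend ω⟩)
      obtain ⟨C, hC⟩ := hbdd 0 t le_rfl ht0 htT
      refine tendsto_integral_of_dominated_convergence (fun _ => C * 1)
        (fun n => ((hmem 0 t le_rfl ht0 htT _ (hfmem n)).1.mono hle0 le_rfl).aestronglyMeasurable)
        (integrable_const _) (fun n => ?_) ?_
      · filter_upwards [hC (f n) 1 (hfmem n) (Eventually.of_forall fun ω => hf1 n ω)] with ω hω
        simpa [Real.norm_eq_abs] using hω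
      · filter_upwards [hcont'] with ω hω using hω.2
    have gadd : ∀ f : ℕ → Set Ω, (∀ i, MeasurableSet[𝔽 t] (f i)) →
        Pairwise (Function.onFun Disjoint f) →
        HasSum (fun i => g (f i)) (g (⋃ i, f i)) := by
      intro f hf hd
      set S : ℕ → Set Ω := fun n => ⋃ i ∈ Finset.range n, f i with hSdef
      have hSm : ∀ n, MeasurableSet[𝔽 t] (S n) :=
        fun n => (Finset.range n).measurableSet_biUnion fun i _ => hf i
      have gadd2 : ∀ A B : Set Ω, MeasurableSet[𝔽 t] A → MeasurableSet[𝔽 t] B → Disjoint A B →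
          g (A ∪ B) = g A + g B := by
        intro A B hA hB hAB
        have hiu : (A ∪ B).indicator (fun _ => (1 : ℝ)) =
            (A.indicator fun _ => (1 : ℝ)) + (B.indicator fun _ => (1 : ℝ)) :=
          Set.indicator_union_of_disjoint hAB _
        have h2 := hadd 0 t le_rfl ht0 htT _ _ (memind A hA) (memind B hB)
        rw [← hiu] at h2
        calc g (A ∪ B)
            = ∫ ω, (π 0 t (A.indicator fun _ => (1 : ℝ)) +
                π 0 t (B.indicator fun _ => (1 : ℝ))) ω ∂μ := integral_congr_ae h2
          _ = g A + g B := by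
              simp only [Pi.add_apply]
              exact integral_add (intπ _ (memind A hA)) (intπ _ (memind B hB))
      have hSsum : ∀ n, g (S n) = ∑ i ∈ Finset.range n, g (f i) := by
        intro n
        induction n with
        | zero => simpa [hSdef] using gempty
        | succ n ih =>
          have hSn : S (n + 1) = S n ∪ f n := by
            simp only [hSdef]
            rw [Finset.range_add_one, Finset.set_biUnion_insert]
            exact Set.union_comm _ _
          have hdisj : Disjoint (S n) (f n) := by
            refine Set.disjoint_left.mpr fun a ha haf => ?_
            simp only [hSdef, Set.mem_iUnion, Finset.mem_range] at ha
            obtain ⟨i, hi, hai⟩ := ha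
            exact Set.disjoint_left.mp (hd hi.ne) hai haf
          rw [Finset.sum_range_succ, ← ih, hSn, gadd2 _ _ (hSm n) (hf n) hdisj]
      have hsub : ∀ n, S n ⊆ ⋃ i, f i := by
        intro n x hx
        simp only [hSdef, Set.mem_iUnion, Finset.mem_range] at hx
        obtain ⟨i, _, hxi⟩ := hx
        exact Set.mem_iUnion.mpr ⟨i, hxi⟩
      have hmono' : Monotone S := by
        intro a b hab x hx
        simp only [hSdef, Set.mem_iUnion, Finset.mem_range] at hx ⊢
        obtain ⟨i, hi, hxi⟩ := hx
        exact ⟨i, lt_of_lt_of_le hi hab, hxi⟩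
      have hUm : MeasurableSet[𝔽 t] (⋃ i, f i) := MeasurableSet.iUnion hf
      have hStend : Tendsto (fun n => g (S n)) atTop (nhds (g (⋃ i, f i))) := by
        refine πtend (fun n => (S n).indicator fun _ => (1 : ℝ))
          ((⋃ i, f i).indicator fun _ => (1 : ℝ)) (fun n => memind _ (hSm n)) (memind _ hUm)
          (fun n ω => by by_cases hω : ω ∈ S n <;> simp [Set.indicator_apply, hω])
          (fun ω a b hab => Set.indicator_le_indicator_of_subset (hmono' hab)
            (fun _ => zero_le_one) ω) ?_
        intro ω
        by_cases hω : ω ∈ ⋃ i, f i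
        · obtain ⟨i, hi⟩ := Set.mem_iUnion.mp hω
          have hev : ∀ n, n ≥ i + 1 → (S n).indicator (fun _ => (1 : ℝ)) ω =
              (⋃ i, f i).indicator (fun _ => (1 : ℝ)) ω := by
            intro n hn
            have hωS : ω ∈ S n := by
              simp only [hSdef, Set.mem_iUnion, Finset.mem_range]
              exact ⟨i, by omega, hi⟩
            simp [Set.indicator_of_mem, hωS, hω]
          exact tendsto_atTop_of_eventually_const hev
        · have hωn : ∀ n, ω ∉ S n := fun n hωS => hω (hsub n hωS)
          have : ∀ n : ℕ, n ≥ 0 → (S n).indicator (fun _ => (1 : ℝ)) ω =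
              (⋃ i, f i).indicator (fun _ => (1 : ℝ)) ω := by
            intro n _
            simp [Set.indicator_of_notMem, hω, hωn n]
          exact tendsto_atTop_of_eventually_const this
      rw [show (fun n => g (S n)) = fun n => ∑ i ∈ Finset.range n, g (f i) from
        funext hSsum] at hStend
      exact (hasSum_iff_tendsto_nat_of_nonneg (fun i => gnn _ (hf i)) _).mpr hStend
    obtain ⟨z, hzm, hz0, hzint, hzset⟩ := rn_lemma (m := 𝔽 t) hle μ g gnn gnull gempty gadd
    have E1 : ∀ A, MeasurableSet[𝔽 t] A →
        ∫ ω, z ω * (A.indicator (fun _ => (1 : ℝ))) ω ∂μ = g A := by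
      intro A hA
      have h1 : (fun ω => z ω * (A.indicator (fun _ => (1 : ℝ))) ω) = A.indicator z := by
        funext ω; by_cases hω : ω ∈ A <;> simp [Set.indicator_apply, hω]
      rw [h1, integral_indicator (hle _ hA), hzset A hA]
    have hintmul : ∀ W : Ω → ℝ, Measurable[𝔽 t] W → (∃ C, ∀ ω, |W ω| ≤ C) →
        Integrable (fun ω => z ω * W ω) μ := by
      rintro W hWm ⟨C, hC⟩
      have h := hzint.bdd_mul (c := C) ((hWm.mono hle le_rfl).aestronglyMeasurable)
        (Eventually.of_forall fun ω => by simpa [Real.norm_eq_abs] using hC ω)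
      exact h.congr (Eventually.of_forall fun ω => mul_comm _ _)
    have main : ∀ Z, MemLinf (𝔽 t) Z → ∫ ω, z ω * Z ω ∂μ = ∫ ω, π 0 t Z ω ∂μ := by
      intro Z hZ
      refine key_ext (m := 𝔽 t) (fun W => ∫ ω, z ω * W ω ∂μ) (fun W => ∫ ω, π 0 t W ω ∂μ)
        ?_ ?_ ?_ ?_ ?_ ?_ ?_ Z hZ.1 hZ.2
      · intro A hA
        rw [E1 A hA, hgdef]
      · intro f g' hf hg' hbf hbg'
        simp only [Pi.add_apply, mul_add]
        exact integral_add (hintmul f hf hbf) (hintmul g' hg' hbg')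
      · intro f g' hf hg' hbf hbg'
        rw [integral_congr_ae (hadd 0 t le_rfl ht0 htT f g' ⟨hf, hbf⟩ ⟨hg', hbg'⟩)]
        simp only [Pi.add_apply]
        exact integral_add (intπ f ⟨hf, hbf⟩) (intπ g' ⟨hg', hbg'⟩)
      · intro c f hf hbf
        simp only [Pi.smul_apply, smul_eq_mul]
        rw [show (fun ω => z ω * (c * f ω)) = fun ω => c * (z ω * f ω) from
          funext fun ω => by ring]
        exact integral_const_mul c _
      · intro c f hf hbf
        rw [integral_congr_ae (hsmul 0 t le_rfl ht0 htT c f ⟨hf, hbf⟩)]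
        simp only [Pi.smul_apply, smul_eq_mul]
        exact integral_const_mul c _
      · intro f flim hfm hflimm hf0 hf1 hfmono hftend
        refine tendsto_integral_of_dominated_convergence (fun ω => |z ω|)
          (fun n => ((hzm.mul (hfm n)).mono hle le_rfl).aestronglyMeasurable)
          hzint.abs (fun n => Eventually.of_forall fun ω => ?_)
          (Eventually.of_forall fun ω => ?_)
        · rw [Real.norm_eq_abs, abs_mul]
          exact mul_le_of_le_one_right (abs_nonneg _)
            (abs_le.mpr ⟨by linarith [hf0 n ω], hf1 n ω⟩)
        · exact (hftend ω).const_mul (z ω)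
      · intro f flim hfm hflimm hf0 hf1 hfmono hftend
        refine πtend f flim
          (fun n => ⟨hfm n, 1, fun ω => abs_le.mpr ⟨by linarith [hf0 n ω], hf1 n ω⟩⟩)
          ⟨hflimm, 1, fun ω => abs_le.mpr ⟨?_, ?_⟩⟩
          (fun n ω => abs_le.mpr ⟨by linarith [hf0 n ω], hf1 n ω⟩) hfmono hftend
        · have := ge_of_tendsto' (hftend ω) (fun n => by linarith [hf0 n ω])
          linarith
        · exact le_of_tendsto' (hftend ω) fun n => hf1 n ω
    -- strict positivity
    have hposz : ∀ᵐ ω ∂μ, 0 < z ω := by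
      set A : Set Ω := {ω | z ω ≤ 0} with hAdef
      have hAm : MeasurableSet[𝔽 t] A := measurableSet_le hzm measurable_const
      have hzero : ∫ ω, z ω * A.indicator (fun _ => (1 : ℝ)) ω ∂μ = 0 := by
        have h1 : (fun ω => z ω * A.indicator (fun _ => (1 : ℝ)) ω) = fun _ => (0 : ℝ) := by
          funext ω
          by_cases hω : ω ∈ A
          · have hz : z ω = 0 := le_antisymm hω (hz0 ω)
            simp [Set.indicator_of_mem hω, hz]
          · simp [Set.indicator_of_notMem hω]
        rw [h1]; simp
      have hgA : g A = 0 := by rw [← E1 A hAm]; exact hzero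
      have hπ0 : π 0 t (A.indicator fun _ => (1 : ℝ)) =ᵐ[μ] 0 := by
        have hnn' := hpos 0 t le_rfl ht0 htT _ (memind A hAm)
          (Eventually.of_forall fun ω => Set.indicator_nonneg (fun _ _ => zero_le_one) ω)
        refine (integral_eq_zero_iff_of_nonneg_ae hnn' (intπ _ (memind A hAm))).mp ?_
        rw [hgdef] at hgA
        exact hgA
      have h1 : (A.indicator fun _ => (1 : ℝ)) =ᵐ[μ] 0 :=
        (hna t ht0 htT _ (memind A hAm)
          (Eventually.of_forall fun ω => Set.indicator_nonneg (fun _ _ => zero_le_one) ω)).mp hπ0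
      have h2 : ∀ᵐ ω ∂μ, ω ∉ A := by
        filter_upwards [h1] with ω hω hωA
        rw [Set.indicator_of_mem hωA] at hω
        norm_num at hω
      filter_upwards [h2] with ω hω
      exact lt_of_not_ge fun hc => hω hc
    exact ⟨z, hzint, hzm, hposz, main⟩
  choose z hz using key
  refine ⟨fun t => if h : 0 ≤ t ∧ t ≤ T then z t h.1 h.2 else fun _ => 1, ?_, ?_⟩
  · intro t ht0 htT
    have ht : 0 ≤ t ∧ t ≤ T := ⟨ht0, htT⟩
    obtain ⟨h1, h2, h3, _⟩ := hz t ht.1 ht.2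
    simp only [dif_pos ht]
    exact ⟨h1, h2, h3⟩
  · intro s t hs0 hst htT Y hY
    have hs : 0 ≤ s ∧ s ≤ T := ⟨hs0, hst.trans htT⟩
    have ht : 0 ≤ t ∧ t ≤ T := ⟨hs0.trans hst, htT⟩
    simp only [dif_pos hs, dif_pos ht]
    obtain ⟨hints, hms, _, hIs⟩ := hz s hs.1 hs.2
    obtain ⟨hintt, hmt, _, hIt⟩ := hz t ht.1 ht.2
    have hmsF : 𝔽 s ≤ F := h𝔽le s hs.1 hs.2
    have hmtF : 𝔽 t ≤ F := h𝔽le t ht.1 ht.2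
    obtain ⟨hYm, CY, hCY⟩ := id hY
    obtain ⟨hπYm, Cπ, hCπ⟩ := hmem s t hs.1 hst htT Y hY
    refine ae_eq_condExp_of_forall_setIntegral_eq hmsF ?_ ?_ ?_ ?_
    · exact (hintt.bdd_mul (c := CY) ((hYm.mono hmtF le_rfl).aestronglyMeasurable)
        (Eventually.of_forall fun ω => by simpa [Real.norm_eq_abs] using hCY ω)).congr
          (Eventually.of_forall fun ω => mul_comm _ _)
    · intro A hA hμA
      exact ((hints.bdd_mul (c := Cπ) ((hπYm.mono hmsF le_rfl).aestronglyMeasurable)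
        (Eventually.of_forall fun ω => by simpa [Real.norm_eq_abs] using hCπ ω)).congr
          (Eventually.of_forall fun ω => mul_comm _ _)).integrableOn
    · intro A hA hμA
      have hindA : MemLinf (𝔽 s) (A.indicator fun _ => (1 : ℝ)) := by
        refine ⟨measurable_const.indicator hA, 1, fun ω => ?_⟩
        by_cases hω : ω ∈ A <;> simp [Set.indicator_apply, hω]
      have hindAt : MemLinf (𝔽 t) (A.indicator fun _ => (1 : ℝ)) :=
        ⟨measurable_const.indicator (h𝔽mono s t hs.1 hst htT A hA), hindA.2⟩
      have hZs : MemLinf (𝔽 s) (fun ω => A.indicator (fun _ => (1 : ℝ)) ω * π s t Y ω) := by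
        refine ⟨hindA.1.mul hπYm, Cπ, fun ω => ?_⟩
        rw [abs_mul]
        refine le_trans (mul_le_of_le_one_left (abs_nonneg _) ?_) (hCπ ω)
        by_cases hω : ω ∈ A <;> simp [Set.indicator_apply, hω]
      have hZt : MemLinf (𝔽 t) (fun ω => A.indicator (fun _ => (1 : ℝ)) ω * Y ω) := by
        refine ⟨hindAt.1.mul hYm, CY, fun ω => ?_⟩
        rw [abs_mul]
        refine le_trans (mul_le_of_le_one_left (abs_nonneg _) ?_) (hCY ω)
        by_cases hω : ω ∈ A <;> simp [Set.indicator_apply, hω]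
      have e1 : ∫ x in A, z s hs.1 hs.2 x * π s t Y x ∂μ =
          ∫ ω, z s hs.1 hs.2 ω * (A.indicator (fun _ => (1 : ℝ)) ω * π s t Y ω) ∂μ := by
        rw [← integral_indicator (hmsF _ hA)]
        congr 1
        funext ω
        by_cases hω : ω ∈ A <;> simp [Set.indicator_apply, hω]
      have e2 : ∫ x in A, z t ht.1 ht.2 x * Y x ∂μ =
          ∫ ω, z t ht.1 ht.2 ω * (A.indicator (fun _ => (1 : ℝ)) ω * Y ω) ∂μ := by
        rw [← integral_indicator (hmsF _ hA)]
        congr 1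
        funext ω
        by_cases hω : ω ∈ A <;> simp [Set.indicator_apply, hω]
      rw [e1, e2, hIs _ hZs, hIt _ hZt]
      exact (integral_congr_ae (hdc 0 s t le_rfl hs.1 hst htT Y _ hY hindA)).symm
    · exact ⟨fun ω => z s hs.1 hs.2 ω * π s t Y ω, (hms.mul hπYm).stronglyMeasurable,
        EventuallyEq.rfl⟩
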